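/- Let G be a graph on n vertices, e = v₁v₂ ∈ E(G), and ω: E(G) → ℝ with ω(e) ≠ 0. Let G' be obtained from G by subdividing e (new vertex v₀, new edges v₀v₁, v₀v₂ replacing v₁v₂). Define μ: E(G') → ℝ by μ(v₀v₁) = μ(v₀v₂) = 2ω(e) and μ(f) = ω(f) for f ∈ E(G)∖{e}, and let ν(f) = ω(f) for f ∈ E(G). Then rank L_{G',μ} = rank L_{G,ν} + 1. -/

import Mathlib

open Finset
open scoped Classical

/-- The weighted Laplacian of a graph with adjacency relation `A` and edge weight `w`. -/
noncomputable def lapMat {V : Type*} [Fintype V] (A : V → V → Prop) (w : V → V → ℝ) :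
    Matrix V V ℝ :=
  Matrix.of fun i j =>
    if i = j then ∑ k, (if A i k then w i k else 0)
    else if A i j then -(w i j) else 0


lemma finrank_submodule_prod {R M N : Type*} [DivisionRing R] [AddCommGroup M] [Module R M]
    [AddCommGroup N] [Module R N] [FiniteDimensional R M] [FiniteDimensional R N]
    (p : Submodule R M) (q : Submodule R N) :
    Module.finrank R (p.prod q) = Module.finrank R p + Module.finrank R q := by
  have e : (p.prod q) ≃ₗ[R] p × q :=
    { toFun := fun x => (⟨x.1.1, x.2.1⟩, ⟨x.1.2, x.2.2⟩)
      invFun := fun y => ⟨(y.1.1, y.2.1), ⟨y.1.2, y.2.2⟩⟩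
      map_add' := fun _ _ => rfl
      map_smul' := fun _ _ => rfl
      left_inv := fun _ => rfl
      right_inv := fun _ => rfl }
  rw [e.finrank_eq, Module.finrank_prod]

lemma range_prodMap' {R M M₂ M₃ M₄ : Type*} [CommRing R] [AddCommGroup M] [Module R M]
    [AddCommGroup M₂] [Module R M₂] [AddCommGroup M₃] [Module R M₃] [AddCommGroup M₄] [Module R M₄]
    (f : M →ₗ[R] M₃) (g : M₂ →ₗ[R] M₄) :
    LinearMap.range (f.prodMap g) = (LinearMap.range f).prod (LinearMap.range g) := by
  ext ⟨x, y⟩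
  simp only [LinearMap.mem_range, Submodule.mem_prod]
  constructor
  · rintro ⟨⟨a, b⟩, h⟩
    simp only [LinearMap.prodMap_apply, Prod.mk.injEq] at h
    exact ⟨⟨a, h.1⟩, ⟨b, h.2⟩⟩
  · rintro ⟨⟨a, ha⟩, ⟨b, hb⟩⟩
    exact ⟨(a, b), by simp [ha, hb]⟩

lemma rank_fromBlocks_diag {l n : Type*} [Fintype l] [Fintype n] [DecidableEq l] [DecidableEq n]
    (A : Matrix l l ℝ) (D : Matrix n n ℝ) :
    (Matrix.fromBlocks A 0 0 D).rank = A.rank + D.rank := by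
  classical
  set e := LinearEquiv.sumArrowLequivProdArrow l n ℝ ℝ with he
  have key : (Matrix.fromBlocks A 0 0 D).mulVecLin
      = (e.symm.toLinearMap ∘ₗ (A.mulVecLin.prodMap D.mulVecLin)) ∘ₗ e.toLinearMap := by
    apply LinearMap.ext
    intro x
    funext i
    cases i with
    | inl a =>
      simp [Matrix.mulVecLin_apply, Matrix.fromBlocks_mulVec, he,
        LinearEquiv.sumArrowLequivProdArrow, Equiv.sumArrowEquivProdArrow]
    | inr b =>
      simp [Matrix.mulVecLin_apply, Matrix.fromBlocks_mulVec, he,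
        LinearEquiv.sumArrowLequivProdArrow, Equiv.sumArrowEquivProdArrow]
  rw [Matrix.rank, key, LinearMap.range_comp_of_range_eq_top _ (LinearMap.range_eq_top.mpr e.surjective),
    LinearMap.range_comp, LinearEquiv.finrank_map_eq, range_prodMap',
    finrank_submodule_prod, Matrix.rank, Matrix.rank]

lemma rank_fromBlocks_inv₁₁ {l n : Type*} [Fintype l] [Fintype n] [DecidableEq l] [DecidableEq n]
    (A : Matrix l l ℝ) (B : Matrix l n ℝ) (C : Matrix n l ℝ) (D : Matrix n n ℝ) [Invertible A] :
    (Matrix.fromBlocks A B C D).rank = A.rank + (D - C * ⅟A * B).rank := by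
  rw [Matrix.fromBlocks_eq_of_invertible₁₁]
  have h1 : IsUnit (Matrix.fromBlocks (1 : Matrix l l ℝ) 0 (C * ⅟A) 1).det := by
    rw [Matrix.det_fromBlocks_zero₁₂]; simp
  have h2 : IsUnit (Matrix.fromBlocks (1 : Matrix l l ℝ) (⅟A * B) 0 1).det := by
    rw [Matrix.det_fromBlocks_zero₂₁]; simp
  rw [Matrix.rank_mul_eq_left_of_isUnit_det _ _ h2,
    Matrix.rank_mul_eq_right_of_isUnit_det _ _ h1, rank_fromBlocks_diag]

/-- Subdividing an edge `e` of weight `ω(e) ≠ 0` and giving the two new edges weight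
`2ω(e)` increases the rank of the weighted Laplacian by exactly one. -/
theorem subdivision_laplacian_rank {V : Type*} [Fintype V]
    (G : SimpleGraph V) (v₁ v₂ : V) (he : G.Adj v₁ v₂)
    (w : V → V → ℝ) (hsymm : ∀ a b, w a b = w b a) (hwe : w v₁ v₂ ≠ 0)
    (G' : SimpleGraph (Option V))
    (hG'some : ∀ a b : V, G'.Adj (some a) (some b) ↔
      (G.Adj a b ∧ ¬(a = v₁ ∧ b = v₂) ∧ ¬(a = v₂ ∧ b = v₁)))
    (hG'none : ∀ a : V, G'.Adj none (some a) ↔ (a = v₁ ∨ a = v₂))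
    (μ : Option V → Option V → ℝ)
    (hμsymm : ∀ a b, μ a b = μ b a)
    (hμnew : μ none (some v₁) = 2 * w v₁ v₂ ∧ μ none (some v₂) = 2 * w v₁ v₂)
    (hμold : ∀ a b : V, G.Adj a b → ¬(a = v₁ ∧ b = v₂) → ¬(a = v₂ ∧ b = v₁) →
      μ (some a) (some b) = w a b) :
    (lapMat G'.Adj μ).rank = (lapMat G.Adj w).rank + 1 := by
  classical
  have hne : v₁ ≠ v₂ := he.ne
  set W := w v₁ v₂ with hW
  have hW4 : (4 : ℝ) * W ≠ 0 := mul_ne_zero (by norm_num) hwe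
  set A : Matrix Unit Unit ℝ := fun _ _ => 4 * W with hA
  set b : V → ℝ := fun j => if j = v₁ ∨ j = v₂ then -(2 * W) else 0 with hb
  set B : Matrix Unit V ℝ := fun _ j => b j with hB
  set C : Matrix V Unit ℝ := fun i _ => b i with hC
  set corr : Matrix V V ℝ := fun i j =>
    (if i = v₁ ∨ i = v₂ then (1:ℝ) else 0) * (if j = v₁ ∨ j = v₂ then 1 else 0) * W with hcorr
  set D : Matrix V V ℝ := lapMat G.Adj w + corr with hD
  haveI : Invertible A := by
    apply A.invertibleOfIsUnitDet
    rw [Matrix.det_unique]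
    exact isUnit_iff_ne_zero.mpr hW4
  set e0 : Option V ≃ Unit ⊕ V :=
    (Equiv.optionEquivSumPUnit V).trans (Equiv.sumComm V Unit) with he0
  have hre : Matrix.reindex e0 e0 (lapMat G'.Adj μ) = Matrix.fromBlocks A B C D := by
    ext i j
    have hsymm0 : e0.symm (Sum.inl ()) = none := rfl
    have hsymm1 : ∀ a : V, e0.symm (Sum.inr a) = some a := fun a => rfl
    cases i with
    | inl u =>
      cases j with
      | inl u' =>
        -- (none, none) entry
        show lapMat G'.Adj μ none none = 4 * W
        have : lapMat G'.Adj μ none none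
            = ∑ k : Option V, (if G'.Adj none k then μ none k else 0) := by
          simp [lapMat]
        rw [this, Fintype.sum_option]
        have h0 : (if G'.Adj none none then μ none none else 0) = 0 := by
          simp [G'.irrefl]
        rw [h0, zero_add]
        have hfun : ∀ k : V, (if G'.Adj none (some k) then μ none (some k) else 0)
            = (if k = v₁ then 2 * W else 0) + (if k = v₂ then 2 * W else 0) := by
          intro k
          by_cases h1 : k = v₁
          · subst h1
            simp [hG'none, hμnew.1, hne, if_neg]
          · by_cases h2 : k = v₂
            · subst h2
              simp [hG'none, hμnew.2, h1]
            · simp [hG'none, h1, h2]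
        rw [Finset.sum_congr rfl (fun k _ => hfun k), Finset.sum_add_distrib]
        simp
        ring
      | inr a =>
        -- (none, some a)
        show lapMat G'.Adj μ none (some a) = b a
        have hne' : (none : Option V) ≠ some a := by simp
        by_cases h1 : a = v₁
        · subst h1
          simp [lapMat, hne', hG'none, hμnew.1, hb]
        · by_cases h2 : a = v₂
          · subst h2
            simp [lapMat, hne', hG'none, hμnew.2, hb, h1]
          · simp [lapMat, hne', hG'none, h1, h2, hb]
    | inr a =>
      cases j with
      | inl u =>
        show lapMat G'.Adj μ (some a) none = b a
        have hne' : (some a : Option V) ≠ none := by simp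
        have hadj : G'.Adj (some a) none ↔ (a = v₁ ∨ a = v₂) := by
          rw [G'.adj_comm]; exact hG'none a
        have hμ' : μ (some a) none = μ none (some a) := hμsymm _ _
        by_cases h1 : a = v₁
        · subst h1
          simp [lapMat, hne', hadj, hμ', hμnew.1, hb]
        · by_cases h2 : a = v₂
          · subst h2
            simp [lapMat, hne', hadj, hμ', hμnew.2, hb, h1]
          · simp [lapMat, hne', hadj, h1, h2, hb]
      | inr c =>
        show lapMat G'.Adj μ (some a) (some c) = D a c
        by_cases hac : a = c
        · subst hac
          -- diagonal
          have lhs : lapMat G'.Adj μ (some a) (some a)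
              = ∑ k : Option V, (if G'.Adj (some a) k then μ (some a) k else 0) := by
            simp [lapMat]
          rw [lhs, Fintype.sum_option]
          have hadj0 : G'.Adj (some a) none ↔ (a = v₁ ∨ a = v₂) := by
            rw [G'.adj_comm]; exact hG'none a
          have h0 : (if G'.Adj (some a) none then μ (some a) none else 0)
              = (if a = v₁ ∨ a = v₂ then 2 * W else 0) := by
            by_cases h : a = v₁ ∨ a = v₂
            · rw [if_pos (hadj0.mpr h), if_pos h, hμsymm]
              rcases h with h | h <;> subst h
              · exact hμnew.1
              · exact hμnew.2
            · rw [if_neg (fun hh => h (hadj0.mp hh)), if_neg h]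
          rw [h0]
          have hfun : ∀ k : V, (if G'.Adj (some a) (some k) then μ (some a) (some k) else 0)
              = (if G.Adj a k then w a k else 0)
                - (if a = v₁ ∧ k = v₂ then W else 0)
                - (if a = v₂ ∧ k = v₁ then W else 0) := by
            intro k
            by_cases h1 : a = v₁ ∧ k = v₂
            · obtain ⟨ha, hk⟩ := h1
              have hnadj : ¬ G'.Adj (some a) (some k) := by
                rw [ha, hk]; simp [hG'some]
              have hg : G.Adj a k := by rw [ha, hk]; exact he
              have h2' : ¬ (a = v₂ ∧ k = v₁) := fun hh => hne (ha.symm.trans hh.1)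
              rw [if_neg hnadj, if_pos hg, if_pos ⟨ha, hk⟩, if_neg h2', ha, hk, ← hW]
              ring
            · by_cases h2 : a = v₂ ∧ k = v₁
              · obtain ⟨ha, hk⟩ := h2
                have hnadj : ¬ G'.Adj (some a) (some k) := by
                  rw [ha, hk]; simp [hG'some]
                have hg : G.Adj a k := by rw [ha, hk]; exact he.symm
                rw [if_neg hnadj, if_pos hg, if_neg h1, if_pos ⟨ha, hk⟩, ha, hk, hsymm v₂ v₁, ← hW]
                ring
              · by_cases hg : G.Adj a k
                · have hadj : G'.Adj (some a) (some k) := (hG'some a k).mpr ⟨hg, h1, h2⟩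
                  rw [if_pos hadj, if_pos hg, hμold a k hg h1 h2, if_neg h1, if_neg h2]
                  ring
                · have hadj : ¬ G'.Adj (some a) (some k) := fun hh => hg ((hG'some a k).mp hh).1
                  simp [hadj, hg, h1, h2]
          rw [Finset.sum_congr rfl (fun k _ => hfun k)]
          have hs1 : ∑ k : V, (if a = v₁ ∧ k = v₂ then W else 0) = if a = v₁ then W else 0 := by
            by_cases h : a = v₁ <;> simp [h]
          have hs2 : ∑ k : V, (if a = v₂ ∧ k = v₁ then W else 0) = if a = v₂ then W else 0 := by
            by_cases h : a = v₂ <;> simp [h]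
          rw [Finset.sum_sub_distrib, Finset.sum_sub_distrib, hs1, hs2]
          have hDval : D a a = (∑ k : V, (if G.Adj a k then w a k else 0))
              + (if a = v₁ ∨ a = v₂ then W else 0) := by
            show lapMat G.Adj w a a + corr a a = _
            simp only [hD, Matrix.add_apply, lapMat, Matrix.of_apply, if_pos rfl, hcorr]
            congr 1
            by_cases h : a = v₁ ∨ a = v₂ <;> simp [h]
          rw [hDval]
          by_cases h1 : a = v₁
          · rw [h1]
            simp [hne]
            ring
          · by_cases h2 : a = v₂
            · rw [h2]
              simp [Ne.symm hne]
              ring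
            · have : ¬ (a = v₁ ∨ a = v₂) := by tauto
              simp [h1, h2, this]
        · -- off-diagonal
          have hso : (some a : Option V) ≠ some c := by simpa using hac
          have lhs : lapMat G'.Adj μ (some a) (some c)
              = if G'.Adj (some a) (some c) then -(μ (some a) (some c)) else 0 := by
            simp [lapMat, hso]
          have hDval : D a c = (if G.Adj a c then -(w a c) else 0) + corr a c := by
            simp [hD, lapMat, hac]
          rw [lhs, hDval]
          by_cases h1 : a = v₁ ∧ c = v₂
          · obtain ⟨ha, hc⟩ := h1
            have hnadj : ¬ G'.Adj (some a) (some c) := by rw [ha, hc]; simp [hG'some]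
            have hg : G.Adj a c := by rw [ha, hc]; exact he
            have hcv : corr a c = W := by simp [hcorr, ha, hc]
            rw [if_neg hnadj, if_pos hg, hcv, ha, hc, ← hW]
            ring
          · by_cases h2 : a = v₂ ∧ c = v₁
            · obtain ⟨ha, hc⟩ := h2
              have hnadj : ¬ G'.Adj (some a) (some c) := by rw [ha, hc]; simp [hG'some]
              have hg : G.Adj a c := by rw [ha, hc]; exact he.symm
              have hcv : corr a c = W := by simp [hcorr, ha, hc]
              rw [if_neg hnadj, if_pos hg, hcv, ha, hc, hsymm v₂ v₁, ← hW]
              ring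
            · have hcorr0 : corr a c = 0 := by
                have h0 : ¬ (a = v₁ ∨ a = v₂) ∨ ¬ (c = v₁ ∨ c = v₂) := by
                  by_contra hcon
                  push_neg at hcon
                  obtain ⟨ha, hc⟩ := hcon
                  rcases ha with ha | ha <;> rcases hc with hc | hc
                  · exact hac (ha.trans hc.symm)
                  · exact h1 ⟨ha, hc⟩
                  · exact h2 ⟨ha, hc⟩
                  · exact hac (ha.trans hc.symm)
                simp only [hcorr]
                rcases h0 with h0 | h0 <;> simp [h0]
              rw [hcorr0, add_zero]
              by_cases hg : G.Adj a c
              · have hadj : G'.Adj (some a) (some c) := (hG'some a c).mpr ⟨hg, h1, h2⟩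
                rw [if_pos hadj, if_pos hg, hμold a c hg h1 h2]
              · have hadj : ¬ G'.Adj (some a) (some c) := fun hh => hg ((hG'some a c).mp hh).1
                rw [if_neg hadj, if_neg hg]
  -- Schur complement equals lapMat G w
  have hinv : (⅟A) () () = (4 * W)⁻¹ := by
    have h2 := congrFun (congrFun (invOf_mul_self A) ()) ()
    have h3 : (⅟A) () () * (4 * W) = 1 := by
      rw [Matrix.mul_apply, Fintype.univ_unit, Finset.sum_singleton, Matrix.one_apply_eq] at h2
      exact h2
    exact eq_inv_of_mul_eq_one_left h3
  have hschur : D - C * ⅟A * B = lapMat G.Adj w := by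
    have hCAB : C * ⅟A * B = corr := by
      ext i j
      have : (C * ⅟A * B) i j = b i * (⅟A) () () * b j := by
        rw [Matrix.mul_apply, Fintype.univ_unit, Finset.sum_singleton, Matrix.mul_apply,
          Fintype.univ_unit, Finset.sum_singleton, hB, hC]
      rw [this, hinv]
      simp only [hcorr, hb]
      by_cases hi : i = v₁ ∨ i = v₂
      · by_cases hj : j = v₁ ∨ j = v₂
        · rw [if_pos hi, if_pos hj, if_pos hi, if_pos hj]
          field_simp
          ring
        · simp [hi, hj]
      · simp [hi]
    rw [hCAB, hD]
    abel
  have hrankA : A.rank = 1 := by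
    rw [Matrix.rank_of_isUnit A (isUnit_of_invertible A)]
    simp
  calc (lapMat G'.Adj μ).rank
      = (Matrix.reindex e0 e0 (lapMat G'.Adj μ)).rank := (Matrix.rank_reindex _ _ _).symm
    _ = (Matrix.fromBlocks A B C D).rank := by rw [hre]
    _ = A.rank + (D - C * ⅟A * B).rank := rank_fromBlocks_inv₁₁ A B C D
    _ = (lapMat G.Adj w).rank + 1 := by rw [hschur, hrankA, add_comm]
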